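/- Let T be a symmetric contraction on a closed subspace dom(T) of a complex Hilbert space H, with representation T = [A; Γ₂D_A] as above. For any two selfadjoint contractions Γ′, Γ″ ∈ 𝒞(T), one has ‖T̃(Γ′) − T̃(Γ″)‖ = ‖D_{Γ₂*}(Γ′ − Γ″)D_{Γ₂*}‖, the map Γ ↦ T̃(Γ) is continuous in operator norm, and Γ′ ≤ Γ″ if and only if T̃(Γ′) ≤ T̃(Γ″). -/

import Mathlib

open scoped InnerProductSpace ComplexOrder
open Filter Topology

noncomputable section

/-- The defect operator `D_C = (I - C*C)^{1/2}` of a bounded operator `C` between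
complex Hilbert spaces. -/
def defectOp {E F : Type*} [NormedAddCommGroup E] [InnerProductSpace ℂ E] [CompleteSpace E]
    [NormedAddCommGroup F] [InnerProductSpace ℂ F] [CompleteSpace F] (C : E →L[ℂ] F) :
    E →L[ℂ] E :=
  CFC.sqrt (1 - ContinuousLinearMap.adjoint C ∘L C)

/-- The defect space `𝒟_C`: the closure of the range of the defect operator `D_C`. -/
def defectSpace {E F : Type*} [NormedAddCommGroup E] [InnerProductSpace ℂ E] [CompleteSpace E]
    [NormedAddCommGroup F] [InnerProductSpace ℂ F] [CompleteSpace F] (C : E →L[ℂ] F) :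
    Submodule ℂ E :=
  (LinearMap.range (defectOp C : E →ₗ[ℂ] E)).topologicalClosure

/-- The defect operator `D_{Γ₂*}` of the adjoint of `Γ₂`. -/
def defectOpAdjoint {H : Type*} [NormedAddCommGroup H] [InnerProductSpace ℂ H] [CompleteSpace H]
    (D : Submodule ℂ H) [CompleteSpace D] (Γ₂ : D →L[ℂ] ↥Dᗮ) : ↥Dᗮ →L[ℂ] ↥Dᗮ :=
  haveI : CompleteSpace ↥Dᗮ := (Submodule.isClosed_orthogonal D).completeSpace_coe
  defectOp (ContinuousLinearMap.adjoint Γ₂)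

/-- The defect space `𝒟_{Γ₂*}` of the adjoint of `Γ₂`. -/
def defectSpaceAdjoint {H : Type*} [NormedAddCommGroup H] [InnerProductSpace ℂ H]
    [CompleteSpace H] (D : Submodule ℂ H) [CompleteSpace D] (Γ₂ : D →L[ℂ] ↥Dᗮ) :
    Submodule ℂ ↥Dᗮ :=
  (LinearMap.range (defectOpAdjoint D Γ₂ : ↥Dᗮ →ₗ[ℂ] ↥Dᗮ)).topologicalClosure

/-- The orthogonal projection of `Dᗮ` onto the defect space `𝒟_{Γ₂*}`; it encodes the identity
operator of `𝒟_{Γ₂*}` as an operator on `Dᗮ`. -/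
def defectProjAdjoint {H : Type*} [NormedAddCommGroup H] [InnerProductSpace ℂ H]
    [CompleteSpace H] (D : Submodule ℂ H) [CompleteSpace D] (Γ₂ : D →L[ℂ] ↥Dᗮ) :
    ↥Dᗮ →L[ℂ] ↥Dᗮ :=
  haveI : CompleteSpace ↥Dᗮ := (Submodule.isClosed_orthogonal D).completeSpace_coe
  haveI : CompleteSpace ↥(defectSpaceAdjoint D Γ₂) :=
    (Submodule.isClosed_topologicalClosure _).completeSpace_coe
  (defectSpaceAdjoint D Γ₂).subtypeL ∘L Submodule.orthogonalProjectionOnto (defectSpaceAdjoint D Γ₂)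

/-- The set `𝒞(T)` of all selfadjoint contractions of the defect space `𝒟_{Γ₂*}`, encoded as
operators on `Dᗮ` vanishing on the orthogonal complement of `𝒟_{Γ₂*}` and with range
contained in `𝒟_{Γ₂*}`. -/
def CSet {H : Type*} [NormedAddCommGroup H] [InnerProductSpace ℂ H] [CompleteSpace H]
    (D : Submodule ℂ H) [CompleteSpace D] (Γ₂ : D →L[ℂ] ↥Dᗮ) : Set (↥Dᗮ →L[ℂ] ↥Dᗮ) :=
  haveI : CompleteSpace ↥Dᗮ := (Submodule.isClosed_orthogonal D).completeSpace_coe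
  {Γ | IsSelfAdjoint Γ ∧ ‖Γ‖ ≤ 1 ∧ LinearMap.range (Γ : ↥Dᗮ →ₗ[ℂ] ↥Dᗮ) ≤ defectSpaceAdjoint D Γ₂ ∧
    (defectSpaceAdjoint D Γ₂)ᗮ ≤ LinearMap.ker (Γ : ↥Dᗮ →ₗ[ℂ] ↥Dᗮ)}

/-- The selfadjoint contraction `T̃(Γ) = [[A, D_A Γ₂*], [Γ₂ D_A, -Γ₂ A* Γ₂* + D_{Γ₂*} Γ D_{Γ₂*}]]`
with respect to the decomposition `H = D ⊕ Dᗮ`. -/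
def tildeT {H : Type*} [NormedAddCommGroup H] [InnerProductSpace ℂ H] [CompleteSpace H]
    (D : Submodule ℂ H) [CompleteSpace D] (A : D →L[ℂ] D) (Γ₂ : D →L[ℂ] ↥Dᗮ)
    (Γ : ↥Dᗮ →L[ℂ] ↥Dᗮ) : H →L[ℂ] H :=
  haveI : CompleteSpace ↥Dᗮ := (Submodule.isClosed_orthogonal D).completeSpace_coe
  D.subtypeL ∘L (A ∘L Submodule.orthogonalProjectionOnto D +
      defectOp A ∘L ContinuousLinearMap.adjoint Γ₂ ∘L Submodule.orthogonalProjectionOnto Dᗮ) +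
    Dᗮ.subtypeL ∘L (Γ₂ ∘L defectOp A ∘L Submodule.orthogonalProjectionOnto D +
      (-(Γ₂ ∘L ContinuousLinearMap.adjoint A ∘L ContinuousLinearMap.adjoint Γ₂) +
          defectOpAdjoint D Γ₂ ∘L Γ ∘L defectOpAdjoint D Γ₂) ∘L Submodule.orthogonalProjectionOnto Dᗮ)

set_option synthInstance.maxHeartbeats 1000000
set_option maxHeartbeats 1000000

section Aux

variable {H : Type*} [NormedAddCommGroup H] [InnerProductSpace ℂ H] [CompleteSpace H]

lemma defectOp_isSelfAdjoint {E F : Type*} [NormedAddCommGroup E] [InnerProductSpace ℂ E]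
    [CompleteSpace E] [NormedAddCommGroup F] [InnerProductSpace ℂ F] [CompleteSpace F]
    (C : E →L[ℂ] F) : IsSelfAdjoint (defectOp C) :=
  IsSelfAdjoint.of_nonneg (CFC.sqrt_nonneg _)

lemma defectOpAdjoint_isSelfAdjoint (D : Submodule ℂ H) [CompleteSpace D]
    (Γ₂ : D →L[ℂ] ↥Dᗮ) : IsSelfAdjoint (defectOpAdjoint D Γ₂) := by
  haveI : CompleteSpace ↥Dᗮ := (Submodule.isClosed_orthogonal D).completeSpace_coe
  exact defectOp_isSelfAdjoint (ContinuousLinearMap.adjoint Γ₂)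

lemma tildeT_sub (D : Submodule ℂ H) [CompleteSpace D] (A : D →L[ℂ] D) (Γ₂ : D →L[ℂ] ↥Dᗮ)
    (Γ' Γ'' : ↥Dᗮ →L[ℂ] ↥Dᗮ) :
    tildeT D A Γ₂ Γ' - tildeT D A Γ₂ Γ'' =
      Dᗮ.subtypeL ∘L (defectOpAdjoint D Γ₂ ∘L (Γ' - Γ'') ∘L defectOpAdjoint D Γ₂) ∘L
        Submodule.orthogonalProjectionOnto Dᗮ := by
  ext ξ
  simp only [tildeT, ContinuousLinearMap.sub_apply, ContinuousLinearMap.add_apply,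
    ContinuousLinearMap.comp_apply, ContinuousLinearMap.neg_apply, Submodule.subtypeL_apply,
    map_sub, Submodule.coe_add, Submodule.coe_sub, Submodule.coe_neg]
  abel

lemma norm_conj_eq (D : Submodule ℂ H) (X : ↥Dᗮ →L[ℂ] ↥Dᗮ) :
    ‖Dᗮ.subtypeL ∘L X ∘L Submodule.orthogonalProjectionOnto Dᗮ‖ = ‖X‖ := by
  apply le_antisymm
  · apply ContinuousLinearMap.opNorm_le_bound _ (norm_nonneg X)
    intro x
    simp only [ContinuousLinearMap.comp_apply, Submodule.subtypeL_apply, Submodule.norm_coe]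
    calc ‖X (Submodule.orthogonalProjectionOnto Dᗮ x)‖ ≤ ‖X‖ * ‖Submodule.orthogonalProjectionOnto Dᗮ x‖ := X.le_opNorm _
      _ ≤ ‖X‖ * ‖x‖ := by
          gcongr
          simpa using ContinuousLinearMap.le_of_opNorm_le _ (Submodule.orthogonalProjectionOnto_norm_le Dᗮ) x
  · apply ContinuousLinearMap.opNorm_le_bound _ (norm_nonneg _)
    intro η
    have h := (Dᗮ.subtypeL ∘L X ∘L Submodule.orthogonalProjectionOnto Dᗮ).le_opNorm (η : H)
    simpa [Submodule.orthogonalProjectionOnto_mem_subspace_eq_self] using h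

lemma coe_inner_eq (K : Submodule ℂ H) [CompleteSpace K] (y : K) (ξ : H) :
    ⟪(y : H), ξ⟫_ℂ = ⟪y, Submodule.orthogonalProjectionOnto K ξ⟫_ℂ := by
  conv_lhs => rw [show ξ = (↑(Submodule.orthogonalProjectionOnto K ξ) : H) + (ξ - Submodule.orthogonalProjectionOnto K ξ)
    by abel]
  rw [inner_add_right, Submodule.inner_right_of_mem_orthogonal y.2
    (show ξ - ↑(Submodule.orthogonalProjectionOnto K ξ) ∈ Kᗮ from K.sub_starProjection_mem_orthogonal ξ), add_zero, Submodule.coe_inner]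

lemma inner_tildeT_sub (D : Submodule ℂ H) [CompleteSpace D] (A : D →L[ℂ] D)
    (Γ₂ : D →L[ℂ] ↥Dᗮ) (Γ' Γ'' : ↥Dᗮ →L[ℂ] ↥Dᗮ) (ξ : H) :
    ⟪(tildeT D A Γ₂ Γ' - tildeT D A Γ₂ Γ'') ξ, ξ⟫_ℂ =
      ⟪(Γ' - Γ'') (defectOpAdjoint D Γ₂ (Submodule.orthogonalProjectionOnto Dᗮ ξ)),
        defectOpAdjoint D Γ₂ (Submodule.orthogonalProjectionOnto Dᗮ ξ)⟫_ℂ := by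
  rw [tildeT_sub]
  simp only [ContinuousLinearMap.comp_apply, Submodule.subtypeL_apply]
  rw [coe_inner_eq]
  have h2 := ContinuousLinearMap.adjoint_inner_left (defectOpAdjoint D Γ₂)
    (Submodule.orthogonalProjectionOnto Dᗮ ξ)
    ((Γ' - Γ'') (defectOpAdjoint D Γ₂ (Submodule.orthogonalProjectionOnto Dᗮ ξ)))
  rw [(defectOpAdjoint_isSelfAdjoint D Γ₂).adjoint_eq] at h2
  exact h2

end Aux

variable {H : Type*} [NormedAddCommGroup H] [InnerProductSpace ℂ H] [CompleteSpace H]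

/-- Let `T` be a symmetric contraction on a closed subspace `D = dom T` of a complex Hilbert
space `H`, with representation `T = [A; Γ₂ D_A]`. For any two selfadjoint contractions
`Γ′, Γ″ ∈ 𝒞(T)`, one has `‖T̃(Γ′) − T̃(Γ″)‖ = ‖D_{Γ₂*}(Γ′ − Γ″)D_{Γ₂*}‖`, the map
`Γ ↦ T̃(Γ)` is continuous in the operator norm, and `Γ′ ≤ Γ″` if and only if
`T̃(Γ′) ≤ T̃(Γ″)`. -/
theorem statement15 (D : Submodule ℂ H) [CompleteSpace D] (T : D →L[ℂ] H)
    (hcontr : ∀ ξ : D, ‖T ξ‖ ≤ ‖(ξ : H)‖)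
    (hsymm : ∀ ξ η : D, ⟪T ξ, (η : H)⟫_ℂ = ⟪(ξ : H), T η⟫_ℂ)
    (A : D →L[ℂ] D) (hA : IsSelfAdjoint A) (hAc : ‖A‖ ≤ 1)
    (Γ₂ : D →L[ℂ] ↥Dᗮ) (hΓ₂c : ‖Γ₂‖ ≤ 1) (hΓ₂ker : (defectSpace A)ᗮ ≤ LinearMap.ker (Γ₂ : D →ₗ[ℂ] ↥Dᗮ))
    (hdecomp : ∀ ξ : D, T ξ = (A ξ : H) + (Γ₂ (defectOp A ξ) : H)) :
    (∀ Γ' ∈ CSet D Γ₂, ∀ Γ'' ∈ CSet D Γ₂,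
      ‖tildeT D A Γ₂ Γ' - tildeT D A Γ₂ Γ''‖ =
        ‖defectOpAdjoint D Γ₂ ∘L (Γ' - Γ'') ∘L defectOpAdjoint D Γ₂‖) ∧
    ContinuousOn (fun Γ => tildeT D A Γ₂ Γ) (CSet D Γ₂) ∧
    (∀ Γ' ∈ CSet D Γ₂, ∀ Γ'' ∈ CSet D Γ₂,
      ((∀ η : ↥Dᗮ, 0 ≤ ⟪(Γ'' - Γ') η, η⟫_ℂ) ↔
        ∀ ξ : H, 0 ≤ ⟪(tildeT D A Γ₂ Γ'' - tildeT D A Γ₂ Γ') ξ, ξ⟫_ℂ)) := by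
  haveI : CompleteSpace ↥Dᗮ := (Submodule.isClosed_orthogonal D).completeSpace_coe
  set dop := defectOpAdjoint D Γ₂ with hdop
  have hnorm : ∀ Γ' Γ'' : ↥Dᗮ →L[ℂ] ↥Dᗮ,
      ‖tildeT D A Γ₂ Γ' - tildeT D A Γ₂ Γ''‖ = ‖dop ∘L (Γ' - Γ'') ∘L dop‖ := by
    intro Γ' Γ''
    rw [tildeT_sub, norm_conj_eq]
  refine ⟨fun Γ' _ Γ'' _ => hnorm Γ' Γ'', ?_, ?_⟩
  · -- continuity
    have lip : LipschitzWith (‖dop‖₊ * ‖dop‖₊) (fun Γ => tildeT D A Γ₂ Γ) := by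
      apply LipschitzWith.of_dist_le_mul
      intro Γ Γ'
      simp only [dist_eq_norm]
      rw [hnorm]
      calc ‖dop ∘L (Γ - Γ') ∘L dop‖ ≤ ‖dop‖ * ‖(Γ - Γ') ∘L dop‖ :=
            ContinuousLinearMap.opNorm_comp_le _ _
        _ ≤ ‖dop‖ * (‖Γ - Γ'‖ * ‖dop‖) := by
            gcongr; exact ContinuousLinearMap.opNorm_comp_le _ _
        _ = ↑(‖dop‖₊ * ‖dop‖₊) * ‖Γ - Γ'‖ := by push_cast; ring
    exact lip.continuous.continuousOn
  · intro Γ' hΓ' Γ'' hΓ''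
    set B := Γ'' - Γ' with hB
    have hBadj : ContinuousLinearMap.adjoint B = B := by
      have h1 : ContinuousLinearMap.adjoint Γ' = Γ' := hΓ'.1.adjoint_eq
      have h2 : ContinuousLinearMap.adjoint Γ'' = Γ'' := hΓ''.1.adjoint_eq
      rw [hB, map_sub, h1, h2]
    have hreal : ∀ η : ↥Dᗮ, (starRingEnd ℂ) ⟪B η, η⟫_ℂ = ⟪B η, η⟫_ℂ := by
      intro η
      rw [inner_conj_symm, ← hBadj, ContinuousLinearMap.adjoint_inner_right, hBadj]
    constructor
    · intro h ξ
      rw [inner_tildeT_sub]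
      exact h _
    · intro h η
      have key : ∀ ζ : ↥Dᗮ, 0 ≤ ⟪B (dop ζ), dop ζ⟫_ℂ := by
        intro ζ
        have := h (ζ : H)
        rwa [inner_tildeT_sub, Submodule.orthogonalProjectionOnto_mem_subspace_eq_self] at this
      set S := defectSpaceAdjoint D Γ₂ with hS
      haveI : CompleteSpace ↥S := (Submodule.isClosed_topologicalClosure _).completeSpace_coe
      -- positivity of the real part on the defect space
      have hposS : ∀ ζ : ↥Dᗮ, ζ ∈ S → 0 ≤ (⟪B ζ, ζ⟫_ℂ).re := by
        have hcont : Continuous fun ζ : ↥Dᗮ => (⟪B ζ, ζ⟫_ℂ).re :=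
          Complex.continuous_re.comp (Continuous.inner (B.cont.comp continuous_id) continuous_id)
        have hclosed : IsClosed {ζ : ↥Dᗮ | 0 ≤ (⟪B ζ, ζ⟫_ℂ).re} :=
          isClosed_le continuous_const hcont
        have hsub : (LinearMap.range (dop : ↥Dᗮ →ₗ[ℂ] ↥Dᗮ) : Set ↥Dᗮ) ⊆ {ζ : ↥Dᗮ | 0 ≤ (⟪B ζ, ζ⟫_ℂ).re} := by
          rintro - ⟨ζ, rfl⟩
          have := (Complex.le_def.mp (key ζ)).1
          simpa using this
        intro ζ hζ
        have hζ' : ζ ∈ closure (LinearMap.range (dop : ↥Dᗮ →ₗ[ℂ] ↥Dᗮ) : Set ↥Dᗮ) := hζ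
        exact hclosed.closure_subset_iff.mpr hsub hζ'
      -- decompose η
      set η₁ : ↥S := Submodule.orthogonalProjectionOnto S η with hη₁
      set η₂ : ↥Dᗮ := η - ↑η₁ with hη₂
      have hη₂S : η₂ ∈ Sᗮ := S.sub_starProjection_mem_orthogonal η
      have hBη₂ : B η₂ = 0 := by
        have h1 : Γ' η₂ = 0 := hΓ'.2.2.2 hη₂S
        have h2 : Γ'' η₂ = 0 := hΓ''.2.2.2 hη₂S
        simp [hB, ContinuousLinearMap.sub_apply, h1, h2]
      have hBη₁S : B ↑η₁ ∈ S := by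
        have h1 : Γ' ↑η₁ ∈ S := hΓ'.2.2.1 ⟨↑η₁, rfl⟩
        have h2 : Γ'' ↑η₁ ∈ S := hΓ''.2.2.1 ⟨↑η₁, rfl⟩
        simpa [hB, ContinuousLinearMap.sub_apply] using S.sub_mem h2 h1
      have hsplit : ⟪B η, η⟫_ℂ = ⟪B ↑η₁, (↑η₁ : ↥Dᗮ)⟫_ℂ := by
        have hη : η = ↑η₁ + η₂ := by rw [hη₂]; abel
        rw [hη, map_add, hBη₂, add_zero, inner_add_right,
          Submodule.inner_right_of_mem_orthogonal hBη₁S hη₂S, add_zero]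
      rw [hsplit]
      rw [Complex.le_def]
      refine ⟨by simpa using hposS _ η₁.2, ?_⟩
      have := hreal ↑η₁
      have him := congrArg Complex.im this
      simp only [Complex.conj_im] at him
      simp only [Complex.zero_im]
      linarith
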